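/- Let ε > 0 and let u_ε : [0,1] → ℝ solve the boundary value problem (u'(x)/(2 + sin(2πx/ε)))' = 1 for x ∈ [0,1], u(0) = 0, u'(1) = u¹. Then u_ε(x) = ∫₀ˣ (2 + sin(2πy/ε))(u¹/(2 + sin(2π/ε)) + y − 1) dy; in particular u_ε(1) = −1 + 2u¹/(2 + sin(2π/ε)) + O(ε) as ε → 0, so if u¹ ≠ 0 then u_ε(1) does not converge as ε → 0. -/

import Mathlib

open Set Filter Topology




lemma Done (x : ℝ) : (1:ℝ) ≤ 2 + Real.sin x := by
  nlinarith [Real.neg_one_le_sin x]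

lemma Dpos (x : ℝ) : (0:ℝ) < 2 + Real.sin x := lt_of_lt_of_le one_pos (Done x)

lemma deriv_formula (u' : ℝ → ℝ) (ε u1 : ℝ) (hε : 0 < ε)
    (hODE : ∀ x ∈ Icc (0:ℝ) 1, HasDerivWithinAt
      (fun t => u' t / (2 + Real.sin (2 * Real.pi * t / ε))) 1 (Icc 0 1) x)
    (hbc1 : u' 1 = u1) :
    ∀ x ∈ Icc (0:ℝ) 1, u' x = (2 + Real.sin (2 * Real.pi * x / ε)) *
      (u1 / (2 + Real.sin (2 * Real.pi / ε)) + x - 1) := by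
  set v := fun t => u' t / (2 + Real.sin (2 * Real.pi * t / ε)) with hv
  have key : ∀ x ∈ Icc (0:ℝ) 1, v x - x = v 1 - 1 := by
    intro x hx
    refine (convex_Icc (0:ℝ) 1).is_const_of_fderivWithin_eq_zero (f := fun t => v t - t)
      (fun z hz => ((hODE z hz).sub (hasDerivWithinAt_id z _)).differentiableWithinAt)
      (fun z hz => ?_) hx (by norm_num)
    have h : HasDerivWithinAt (fun t => v t - t) 0 (Icc 0 1) z := by
      simpa [Pi.sub_def] using (hODE z hz).sub (hasDerivWithinAt_id z _)
    have h2 := h.hasFDerivWithinAt.fderivWithin ((uniqueDiffOn_Icc one_pos) z hz)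
    rw [h2]; ext w; simp
  intro x hx
  have h1 : v x = v 1 + x - 1 := by have := key x hx; linarith
  have hv1 : v 1 = u1 / (2 + Real.sin (2 * Real.pi / ε)) := by
    simp [hv, hbc1]
  have h2 : u' x = v x * (2 + Real.sin (2 * Real.pi * x / ε)) := by
    rw [hv]; field_simp [(Dpos (2 * Real.pi * x / ε)).ne']
  rw [h2, h1, hv1]; ring


lemma anti_deriv (ε c : ℝ) (hε : 0 < ε) (y : ℝ) :
    HasDerivAt (fun y => 2*(c*y + y^2/2 - y)
      - (c + y - 1) * Real.cos (2*Real.pi*y/ε) * (ε/(2*Real.pi))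
      + Real.sin (2*Real.pi*y/ε) * (ε/(2*Real.pi))^2)
      ((2 + Real.sin (2*Real.pi*y/ε)) * (c + y - 1)) y := by
  have hπ := Real.pi_pos
  have hinner : HasDerivAt (fun y : ℝ => 2*Real.pi*y/ε) (2*Real.pi/ε) y := by
    simpa using ((hasDerivAt_id y).const_mul (2*Real.pi)).div_const ε
  have hsin := hinner.sin
  have hcos := hinner.cos
  have hlin : HasDerivAt (fun y : ℝ => c + y - 1) 1 y := by
    simpa using ((hasDerivAt_id y).const_add c).sub_const 1
  have hpoly : HasDerivAt (fun y : ℝ => 2*(c*y + y^2/2 - y)) (2*(c + y - 1)) y := by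
    have h1 : HasDerivAt (fun y : ℝ => c*y + y^2/2 - y) (c + y - 1) y := by
      simpa [Pi.sub_def, Pi.add_def] using (((hasDerivAt_id y).const_mul c).add ((hasDerivAt_pow 2 y).div_const 2)).sub (hasDerivAt_id y)
    simpa using h1.const_mul 2
  have H := (hpoly.sub ((hlin.mul hcos).mul_const (ε/(2*Real.pi)))).add
    (hsin.mul_const ((ε/(2*Real.pi))^2))
  refine H.congr_deriv ?_
  field_simp
  ring

lemma integral_bound (ε u1 : ℝ) (hε : 0 < ε) (hε1 : ε ≤ 1) :
    |(∫ y in (0:ℝ)..1, (2 + Real.sin (2*Real.pi*y/ε)) * (u1/(2+Real.sin (2*Real.pi/ε)) + y - 1))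
      - (-1 + 2*u1/(2+Real.sin (2*Real.pi/ε)))| ≤ (|u1|+1) * ε := by
  have hπ := Real.pi_gt_three
  have hπ0 : (0:ℝ) < Real.pi := by linarith
  set c := u1/(2+Real.sin (2*Real.pi/ε)) with hc
  have hII : IntervalIntegrable (fun y => (2 + Real.sin (2*Real.pi*y/ε)) * (c + y - 1)) MeasureTheory.volume 0 1 := by
    apply Continuous.intervalIntegrable
    fun_prop
  have hint := intervalIntegral.integral_eq_sub_of_hasDerivAt
    (fun y (_ : y ∈ uIcc (0:ℝ) 1) => anti_deriv ε c hε y) hII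
  rw [hint]
  beta_reduce
  have hz : 2*Real.pi*0/ε = 0 := by ring
  have ho : 2*Real.pi*1/ε = 2*Real.pi/ε := by ring
  rw [hz, ho, Real.cos_zero, Real.sin_zero]
  set s := Real.sin (2*Real.pi/ε) with hs
  set co := Real.cos (2*Real.pi/ε) with hco
  have h2 : 2*u1/(2+s) = 2*c := by rw [hc]; ring
  rw [h2]
  have hE : (2*(c*1 + 1^2/2 - 1) - (c + 1 - 1) * co * (ε/(2*Real.pi)) + s * (ε/(2*Real.pi))^2)
      - (2*(c*0 + 0^2/2 - 0) - (c + 0 - 1) * 1 * (ε/(2*Real.pi)) + 0 * (ε/(2*Real.pi))^2)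
      - (-1 + 2*c)
      = ((c - 1) - c*co) * (ε/(2*Real.pi)) + s * (ε/(2*Real.pi))^2 := by ring
  rw [hE]
  have hk : (0:ℝ) < ε/(2*Real.pi) := by positivity
  have hcb : |c| ≤ |u1| := by
    rw [hc, abs_div]
    refine div_le_self (abs_nonneg _) ?_
    rw [abs_of_pos (Dpos _)]
    exact Done _
  have hA : |(c - 1) - c*co| ≤ 2*|u1| + 1 := by
    have h1 := abs_sub (c - 1) (c*co)
    have h2 : |c*co| ≤ |c| := by
      rw [abs_mul]
      exact mul_le_of_le_one_right (abs_nonneg c) (Real.abs_cos_le_one _)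
    have h3 := abs_sub c 1
    simp only [abs_one] at h3
    linarith
  have step : |((c - 1) - c*co) * (ε/(2*Real.pi)) + s * (ε/(2*Real.pi))^2|
      ≤ (2*|u1| + 1) * (ε/(2*Real.pi)) + 1 * (ε/(2*Real.pi))^2 := by
    refine (abs_add_le _ _).trans ?_
    rw [abs_mul, abs_mul, abs_of_pos hk, abs_of_nonneg (by positivity : (0:ℝ) ≤ (ε/(2*Real.pi))^2)]
    gcongr
    exact Real.abs_sin_le_one _
  refine step.trans ?_
  rw [div_pow]
  have hu := abs_nonneg u1
  have ha : ε/(2*Real.pi) ≤ ε/6 := by gcongr; linarith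
  have hb : ε^2/(2*Real.pi)^2 ≤ ε/36 := by
    rw [div_le_div_iff₀ (by positivity) (by norm_num)]
    nlinarith [mul_nonneg (sub_nonneg.2 hε1) hε.le, sq_nonneg (Real.pi - 3)]
  nlinarith [mul_nonneg hu hε.le]


lemma seq_limit (u : ℝ → ℝ → ℝ) (u1 L C : ℝ)
    (hbound : ∀ ε ∈ Ioc (0:ℝ) 1, |u ε 1 - (-1 + 2*u1/(2+Real.sin (2*Real.pi/ε)))| ≤ C*ε)
    (hL : Tendsto (fun ε => u ε 1) (𝓝[>] 0) (𝓝 L))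
    (b v : ℝ) (hb : 0 < b)
    (hsin : ∀ k : ℕ, Real.sin (2*Real.pi/((k:ℝ)+b)⁻¹) = v) :
    L = -1 + 2*u1/(2+v) := by
  set s : ℕ → ℝ := fun k => ((k:ℝ)+b)⁻¹ with hsdef
  have hpos : ∀ k, 0 < s k := fun k => by positivity
  have hts : Tendsto s atTop (𝓝[>] 0) :=
    tendsto_inv_atTop_nhdsGT_zero.comp (tendsto_atTop_add_const_right atTop b tendsto_natCast_atTop_atTop)
  have h0 : Tendsto s atTop (𝓝 0) := hts.mono_right nhdsWithin_le_nhds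
  have h1 : Tendsto (fun k => u (s k) 1) atTop (𝓝 L) := hL.comp hts
  have hle : ∀ᶠ k in atTop, s k ≤ 1 := h0.eventually (eventually_le_nhds one_pos)
  have hb2 : ∀ᶠ k in atTop, ‖u (s k) 1 - (-1 + 2*u1/(2+v))‖ ≤ C * s k := by
    filter_upwards [hle] with k hk
    rw [Real.norm_eq_abs]
    have h := hbound (s k) ⟨hpos k, hk⟩
    rwa [hsin k] at h
  have h0' : Tendsto (fun k => C * s k) atTop (𝓝 0) := by
    simpa using h0.const_mul C
  have h2 : Tendsto (fun k => u (s k) 1) atTop (𝓝 (-1 + 2*u1/(2+v))) :=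
    tendsto_sub_nhds_zero_iff.mp (squeeze_zero_norm' hb2 h0')
  exact tendsto_nhds_unique h1 h2

lemma sin_quarter (k : ℕ) : Real.sin (2*Real.pi/((k:ℝ)+4⁻¹)⁻¹) = 1 := by
  have h : 2*Real.pi/((k:ℝ)+4⁻¹)⁻¹ = Real.pi/2 + (k:ℝ)*(2*Real.pi) := by
    rw [div_inv_eq_mul]; ring
  rw [h]
  have h2 := Real.sin_add_int_mul_two_pi (Real.pi/2) (k:ℤ)
  push_cast at h2
  rw [h2, Real.sin_pi_div_two]

lemma sin_three_quarter (k : ℕ) : Real.sin (2*Real.pi/((k:ℝ)+(3/4:ℝ))⁻¹) = -1 := by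
  have h : 2*Real.pi/((k:ℝ)+(3/4:ℝ))⁻¹ = -(Real.pi/2) + ((k:ℝ)+1)*(2*Real.pi) := by
    rw [div_inv_eq_mul]; ring
  rw [h]
  have h2 := Real.sin_add_int_mul_two_pi (-(Real.pi/2)) ((k:ℤ)+1)
  push_cast at h2
  rw [h2, Real.sin_neg, Real.sin_pi_div_two]

theorem stmt10 (u u' : ℝ → ℝ → ℝ) (u1 : ℝ)
    (hderiv : ∀ ε > (0:ℝ), ∀ x ∈ Icc (0:ℝ) 1,
      HasDerivWithinAt (u ε) (u' ε x) (Icc 0 1) x)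
    (hcont : ∀ ε > (0:ℝ), ContinuousOn (u' ε) (Icc 0 1))
    (hODE : ∀ ε > (0:ℝ), ∀ x ∈ Icc (0:ℝ) 1,
      HasDerivWithinAt (fun t => u' ε t / (2 + Real.sin (2 * Real.pi * t / ε)))
        1 (Icc 0 1) x)
    (hbc0 : ∀ ε > (0:ℝ), u ε 0 = 0)
    (hbc1 : ∀ ε > (0:ℝ), u' ε 1 = u1) :
    (∀ ε > (0:ℝ), ∀ x ∈ Icc (0:ℝ) 1,
      u ε x = ∫ y in (0:ℝ)..x, (2 + Real.sin (2 * Real.pi * y / ε)) *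
        (u1 / (2 + Real.sin (2 * Real.pi / ε)) + y - 1)) ∧
    (∃ C > (0:ℝ), ∃ ε₀ > (0:ℝ), ∀ ε ∈ Ioc (0:ℝ) ε₀,
      |u ε 1 - (-1 + 2 * u1 / (2 + Real.sin (2 * Real.pi / ε)))| ≤ C * ε) ∧
    (u1 ≠ 0 → ¬ ∃ L : ℝ, Tendsto (fun ε => u ε 1) (𝓝[>] 0) (𝓝 L)) := by
  have part1 : ∀ ε > (0:ℝ), ∀ x ∈ Icc (0:ℝ) 1,
      u ε x = ∫ y in (0:ℝ)..x, (2 + Real.sin (2 * Real.pi * y / ε)) *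
        (u1 / (2 + Real.sin (2 * Real.pi / ε)) + y - 1) := by
    intro ε hε x hx
    have hfd := deriv_formula (u' ε) ε u1 hε (hODE ε hε) (hbc1 ε hε)
    have hFTC : ∫ y in (0:ℝ)..x, u' ε y = u ε x - u ε 0 := by
      apply intervalIntegral.integral_eq_sub_of_hasDeriv_right_of_le hx.1
      · exact ContinuousOn.mono (fun y hy => (hderiv ε hε y hy).continuousWithinAt)
          (Icc_subset_Icc le_rfl hx.2)
      · intro y hy
        exact (hderiv ε hε y ⟨le_of_lt hy.1, le_trans (le_of_lt hy.2) hx.2⟩).mono_of_mem_nhdsWithin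
          (Icc_mem_nhdsGT_of_mem ⟨le_of_lt hy.1, lt_of_lt_of_le hy.2 hx.2⟩)
      · exact ((hcont ε hε).mono (Icc_subset_Icc le_rfl hx.2)).intervalIntegrable_of_Icc hx.1
    have hcongr : ∫ y in (0:ℝ)..x, u' ε y = ∫ y in (0:ℝ)..x,
        (2 + Real.sin (2 * Real.pi * y / ε)) *
          (u1 / (2 + Real.sin (2 * Real.pi / ε)) + y - 1) := by
      apply intervalIntegral.integral_congr
      intro y hy
      rw [uIcc_of_le hx.1] at hy
      exact hfd y ⟨hy.1, le_trans hy.2 hx.2⟩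
    rw [← hcongr, hFTC, hbc0 ε hε, sub_zero]
  have hbound : ∀ ε ∈ Ioc (0:ℝ) 1,
      |u ε 1 - (-1 + 2 * u1 / (2 + Real.sin (2 * Real.pi / ε)))| ≤ (|u1| + 1) * ε := by
    intro ε hε
    rw [part1 ε hε.1 1 (by norm_num)]
    exact integral_bound ε u1 hε.1 hε.2
  refine ⟨part1, ⟨|u1| + 1, by positivity, 1, one_pos, hbound⟩, ?_⟩
  rintro hu1 ⟨L, hL⟩
  have e1 : L = -1 + 2*u1/(2+(1:ℝ)) :=
    seq_limit u u1 L (|u1|+1) hbound hL 4⁻¹ 1 (by norm_num) sin_quarter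
  have e2 : L = -1 + 2*u1/(2+(-1:ℝ)) :=
    seq_limit u u1 L (|u1|+1) hbound hL (3/4) (-1) (by norm_num) sin_three_quarter
  rw [e2] at e1
  norm_num at e1
  exact hu1 (by linarith)
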